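/- Suppose X is Hausdorff, κ infinite, and X = ⋃_{α<λ} X_α is an increasing union with F(X_α) ≤ κ, ψ(X_α) ≤ κ, and L(X_α) ≤ κ for all α < λ. Then |X| ≤ 2^κ. -/

import Mathlib

open Cardinal Set

universe u

variable {X : Type u} [TopologicalSpace X]

/-- The Lindelöf number of the subspace `Y` is at most `κ`. -/
def LindelofLE (Y : Set X) (κ : Cardinal.{u}) : Prop :=
  ∀ U : Set (Set X), (∀ u ∈ U, IsOpen u) → Y ⊆ ⋃₀ U →
    ∃ V ⊆ U, #V ≤ κ ∧ Y ⊆ ⋃₀ V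

/-- The pseudocharacter of the subspace `Y` is at most `κ`. -/
def PseudoLE (Y : Set X) (κ : Cardinal.{u}) : Prop :=
  ∀ x ∈ Y, ∃ U : Set (Set X), (∀ u ∈ U, IsOpen u) ∧ #U ≤ κ ∧ (⋂₀ U) ∩ Y = {x}

/-- A free sequence in the subspace `Y`: a well-orderable family of points of `Y` such
that, for every cut, the closures *in `Y`* of the initial segment and of the tail are
disjoint. -/
def IsFreeSequenceIn (Y : Set X) {α : Type u} [LinearOrder α] (f : α → X) : Prop :=
  (∀ a, f a ∈ Y) ∧
    ∀ b : α, Disjoint (closure (f '' {a | a < b}) ∩ Y) (closure (f '' {a | b ≤ a}) ∩ Y)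

/-- `F(Y) ≤ κ`: every free sequence in the subspace `Y` has length at most `κ`. -/
def FreeLE (Y : Set X) (κ : Cardinal.{u}) : Prop :=
  ∀ (α : Type u) [LinearOrder α] [WellFoundedLT α] (f : α → X),
    IsFreeSequenceIn Y f → #α ≤ κ

set_option linter.unusedSectionVars false
set_option linter.unusedVariables false
set_option linter.dupNamespace false
set_option maxHeartbeats 1000000

namespace S9
variable {κ : Cardinal.{u}}

lemma inf2pow (hκ : ℵ₀ ≤ κ) : ℵ₀ ≤ (2 : Cardinal.{u}) ^ κ := hκ.trans (Cardinal.cantor κ).le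

lemma pow_absorb (hκ : ℵ₀ ≤ κ) : ((2 : Cardinal.{u}) ^ κ) ^ κ = 2 ^ κ := by
  rw [← Cardinal.power_mul, Cardinal.mul_eq_self hκ]

lemma mul_2pow (hκ : ℵ₀ ≤ κ) : (2 : Cardinal.{u}) ^ κ * 2 ^ κ = 2 ^ κ :=
  Cardinal.mul_eq_self (inf2pow hκ)

lemma succ_le_2pow : Order.succ κ ≤ (2 : Cardinal.{u}) ^ κ := Order.succ_le_of_lt (Cardinal.cantor κ)

lemma ciSup_le_card {ι : Type u} (f : ι → Cardinal.{u}) {c : Cardinal.{u}}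
    (h : ∀ i, f i ≤ c) : iSup f ≤ c := by
  rcases isEmpty_or_nonempty ι with hι | hι
  · simp [iSup_of_empty]
  · exact ciSup_le' h

lemma mk_iUnion_le' {α ι : Type u} (f : ι → Set α) {c : Cardinal.{u}} (hc : ℵ₀ ≤ c)
    (hι : #ι ≤ c) (h : ∀ i, #(f i) ≤ c) : #(⋃ i, f i) ≤ c := by
  refine (Cardinal.mk_iUnion_le f).trans ?_
  calc #ι * ⨆ i, #(f i) ≤ c * c := by
        exact mul_le_mul' hι (ciSup_le_card _ h)
    _ = c := Cardinal.mul_eq_self hc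

lemma exists_fun_range {α : Type u} {A s : Set α} (hsA : s ⊆ A) (hs : s.Nonempty)
    (h : #s ≤ κ) : ∃ f : κ.ord.ToType → A, Subtype.val '' Set.range f = s := by
  rw [← Cardinal.mk_ord_toType κ] at h
  obtain ⟨g⟩ := Cardinal.le_def _ _ |>.1 h
  classical
  refine ⟨fun i => if h : ∃ y : s, g y = i then ⟨(h.choose : α), hsA (h.choose.2)⟩
    else ⟨hs.choose, hsA hs.choose_spec⟩, ?_⟩
  apply Set.eq_of_subset_of_subset
  · rintro x ⟨a, ⟨i, rfl⟩, rfl⟩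
    dsimp only
    split
    · next h => exact h.choose.2
    · exact hs.choose_spec
  · intro x hx
    refine ⟨_, ⟨g ⟨x, hx⟩, rfl⟩, ?_⟩
    have he : ∃ y : s, g y = g ⟨x, hx⟩ := ⟨⟨x, hx⟩, rfl⟩
    dsimp only
    rw [dif_pos he]
    have := g.injective he.choose_spec
    rw [this]

lemma count_small_subsets {α : Type u} (hκ : ℵ₀ ≤ κ) (A : Set α)
    (hA : #A ≤ 2 ^ κ) : #{s : Set α | s ⊆ A ∧ #s ≤ κ} ≤ 2 ^ κ := by
  classical
  have hΦ : ∃ Φ : {s : Set α | s ⊆ A ∧ #s ≤ κ} → Option (κ.ord.ToType → A),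
      Function.Injective Φ := by
    refine ⟨fun s => if h : (s : Set α).Nonempty then
      some (exists_fun_range s.2.1 h s.2.2).choose else none, ?_⟩
    intro s t hst
    dsimp only at hst
    split at hst <;> split at hst
    · case _ hs ht =>
      apply Subtype.ext
      have h1 := (exists_fun_range s.2.1 hs s.2.2).choose_spec
      have h2 := (exists_fun_range t.2.1 ht t.2.2).choose_spec
      rw [← h1, ← h2, Option.some_inj.1 hst]
    · simp at hst
    · simp at hst
    · case _ hs ht =>
      apply Subtype.ext
      have e1 := Set.not_nonempty_iff_eq_empty.1 hs
      have e2 := Set.not_nonempty_iff_eq_empty.1 ht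
      rw [e1, e2]
  obtain ⟨Φ, hΦ⟩ := hΦ
  refine (Cardinal.mk_le_of_injective hΦ).trans ?_
  rw [Cardinal.mk_option]
  have h1 : #(κ.ord.ToType → A) ≤ 2 ^ κ := by
    rw [← Cardinal.power_def, Cardinal.mk_ord_toType]
    calc (#A) ^ κ ≤ ((2 : Cardinal.{u}) ^ κ) ^ κ := Cardinal.power_le_power_right hA
      _ = 2 ^ κ := by rw [← Cardinal.power_mul, Cardinal.mul_eq_self hκ]
  have h2 : ℵ₀ ≤ (2 : Cardinal.{u}) ^ κ := hκ.trans (Cardinal.cantor κ).le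
  calc #(κ.ord.ToType → A) + 1 ≤ 2 ^ κ + 2 ^ κ :=
        add_le_add h1 (le_trans (le_of_lt one_lt_aleph0) h2)
    _ = 2 ^ κ := Cardinal.add_eq_self h2

variable {X : Type u} [TopologicalSpace X]

lemma mem_closure_inter {s W : Set X} {y : X} (hy : y ∈ closure s) (hW : IsOpen W)
    (hyW : y ∈ W) : y ∈ closure (s ∩ W) := by
  rw [mem_closure_iff] at hy ⊢
  intro o ho hyo
  obtain ⟨z, hz⟩ := hy (o ∩ W) (ho.inter hW) ⟨hyo, hyW⟩
  exact ⟨z, ⟨hz.1.1, hz.2, hz.1.2⟩⟩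

lemma closure_disj {s W : Set X} (hW : IsOpen W) (h : ∀ x ∈ s, x ∉ W) :
    ∀ y ∈ closure s, y ∉ W := by
  intro y hy hyW
  rw [mem_closure_iff] at hy
  obtain ⟨z, hz⟩ := hy W hW hyW
  exact h z hz.2 hz.1

lemma lemmaA [T2Space X] (hκ : ℵ₀ ≤ κ) {Y : Set X} (hψ : PseudoLE Y κ) (hL : LindelofLE Y κ)
    {x : X} (hx : x ∈ Y) :
    ∃ C : Set (Set X), (∀ W ∈ C, IsOpen W ∧ x ∈ W) ∧ #C ≤ κ ∧
      (⋂ W ∈ C, closure W) ∩ Y = {x} := by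
  classical
  obtain ⟨U₀, hU₀open, hU₀card, hU₀⟩ := hψ x hx
  have hxU₀ : x ∈ ⋂₀ U₀ := by
    have : x ∈ (⋂₀ U₀) ∩ Y := by rw [hU₀]; exact rfl
    exact this.1
  have main : ∀ u ∈ U₀, ∃ Cu : Set (Set X), (∀ W ∈ Cu, IsOpen W ∧ x ∈ W) ∧ #Cu ≤ κ ∧
      ∀ z ∈ Y, z ∉ u → ∃ W ∈ Cu, z ∉ closure W := by
    intro u hu
    have hxu : x ∈ u := hxU₀ u hu
    have sep : ∀ y : X, y ∈ Y \ u → ∃ p : Set X × Set X,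
        IsOpen p.1 ∧ IsOpen p.2 ∧ y ∈ p.1 ∧ x ∈ p.2 ∧ ∀ z ∈ p.1, z ∉ p.2 := by
      intro y hy
      have hyx : y ≠ x := fun h => hy.2 (h ▸ hxu)
      obtain ⟨a, b, ha, hb, hya, hxb, hab⟩ := t2_separation hyx
      exact ⟨⟨a, b⟩, ha, hb, hya, hxb, fun z hz hz' => Set.disjoint_left.1 hab hz hz'⟩
    set Af : X → Set X := fun y => if h : y ∈ Y \ u then (sep y h).choose.1 else ∅ with hAf
    set Bf : X → Set X := fun y => if h : y ∈ Y \ u then (sep y h).choose.2 else univ with hBf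
    have hA : ∀ y ∈ Y \ u, IsOpen (Af y) ∧ y ∈ Af y := by
      intro y hy
      simp only [hAf, dif_pos hy]
      exact ⟨(sep y hy).choose_spec.1, (sep y hy).choose_spec.2.2.1⟩
    have hB : ∀ y ∈ Y \ u, IsOpen (Bf y) ∧ x ∈ Bf y ∧ ∀ z ∈ Af y, z ∉ Bf y := by
      intro y hy
      simp only [hAf, hBf, dif_pos hy]
      exact ⟨(sep y hy).choose_spec.2.1, (sep y hy).choose_spec.2.2.2.1,
        (sep y hy).choose_spec.2.2.2.2⟩
    obtain ⟨V, hVsub, hVcard, hVcover⟩ := hL (insert u (Af '' (Y \ u)))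
      (by
        intro v hv
        rcases Set.mem_insert_iff.1 hv with h | ⟨y, hy, h⟩
        · rw [h]; exact hU₀open u hu
        · rw [← h]; exact (hA y hy).1)
      (by
        intro y hy
        by_cases hyu : y ∈ u
        · exact ⟨u, Set.mem_insert _ _, hyu⟩
        · exact ⟨Af y, Set.mem_insert_of_mem _ ⟨y, ⟨hy, hyu⟩, rfl⟩, (hA y ⟨hy, hyu⟩).2⟩)
    set Csel : Set X → Set X := fun v =>
      if h : ∃ y, y ∈ Y \ u ∧ Af y = v then Bf h.choose else univ with hCsel
    refine ⟨Csel '' (V \ {u}), ?_, ?_, ?_⟩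
    · rintro W ⟨v, hv, rfl⟩
      simp only [hCsel]
      split
      · next h => exact ⟨(hB _ h.choose_spec.1).1, (hB _ h.choose_spec.1).2.1⟩
      · exact ⟨isOpen_univ, Set.mem_univ x⟩
    · exact (Cardinal.mk_image_le).trans
        ((Cardinal.mk_le_mk_of_subset (Set.diff_subset)).trans hVcard)
    · intro z hz hzu
      obtain ⟨v, hvV, hzv⟩ := hVcover hz
      have hvne : v ≠ u := fun h => hzu (h ▸ hzv)
      have hvmem : v ∈ V \ {u} := ⟨hvV, hvne⟩
      have hvA : ∃ y, y ∈ Y \ u ∧ Af y = v := by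
        rcases Set.mem_insert_iff.1 (hVsub hvV) with h | ⟨y, hy, h⟩
        · exact absurd h hvne
        · exact ⟨y, hy, h⟩
      refine ⟨Csel v, ⟨v, hvmem, rfl⟩, ?_⟩
      simp only [hCsel, dif_pos hvA]
      set y₁ := hvA.choose with hy₁
      have hy₁p := hvA.choose_spec
      intro hcl
      have hzA : z ∈ Af y₁ := by rw [hy₁p.2]; exact hzv
      exact closure_disj (hA y₁ hy₁p.1).1
        (fun w hw hw' => (hB y₁ hy₁p.1).2.2 w hw' hw) z hcl hzA
  choose Cu hCu1 hCu2 hCu3 using main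
  refine ⟨⋃ u : ↥U₀, Cu u u.2, ?_, ?_, ?_⟩
  · intro W hW
    obtain ⟨u, hu⟩ := Set.mem_iUnion.1 hW
    exact hCu1 u u.2 W hu
  · exact mk_iUnion_le' _ hκ (hU₀card) (fun u => hCu2 u u.2)
  · apply Set.eq_of_subset_of_subset
    · rintro z ⟨hz1, hz2⟩
      by_contra hzx
      have hzx' : z ≠ x := fun h => hzx (h ▸ rfl)
      have hzU₀ : z ∉ ⋂₀ U₀ := by
        intro hmem
        have : z ∈ (⋂₀ U₀) ∩ Y := ⟨hmem, hz2⟩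
        rw [hU₀] at this
        exact hzx' this
      have hex : ∃ u ∈ U₀, z ∉ u := by
        by_contra hc
        push_neg at hc
        exact hzU₀ (fun u hu => hc u hu)
      obtain ⟨u, hu, hzu⟩ := hex
      obtain ⟨W, hWmem, hWcl⟩ := hCu3 u hu z hz2 hzu
      have : z ∈ closure W := by
        have := Set.mem_iInter₂.1 hz1 W (Set.mem_iUnion.2 ⟨⟨u, hu⟩, hWmem⟩)
        exact this
      exact hWcl this
    · intro z hz
      rcases hz with rfl
      refine ⟨Set.mem_iInter₂.2 ?_, hx⟩
      intro W hW
      obtain ⟨u, hu⟩ := Set.mem_iUnion.1 hW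
      exact subset_closure (hCu1 u u.2 W hu).2

lemma no_long_free (hκ : ℵ₀ ≤ κ) {Y : Set X} (hFr : FreeLE Y κ) (g : Ordinal.{u} → X)
    (hmem : ∀ ζ, ζ < (Order.succ κ).ord → g ζ ∈ Y)
    (hdisj : ∀ β, β < (Order.succ κ).ord →
      Disjoint (closure (g '' Set.Iio β) ∩ Y)
        (closure (g '' {ζ | β ≤ ζ ∧ ζ < (Order.succ κ).ord}) ∩ Y)) : False := by
  set o := (Order.succ κ).ord with ho
  set e : o.ToType ≃o Set.Iio o := (Ordinal.ToType.mk (o := o)).symm with he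
  set f : o.ToType → X := fun i => g (e i).1 with hf
  have h1 : IsFreeSequenceIn Y f := by
    constructor
    · intro a; exact hmem _ (e a).2
    · intro b
      have himg1 : f '' {a | a < b} = g '' Set.Iio (e b).1 := by
        apply Set.eq_of_subset_of_subset
        · rintro x ⟨a, ha, rfl⟩
          exact ⟨(e a).1, e.strictMono ha, rfl⟩
        · rintro x ⟨η, hη, rfl⟩
          have hηo : η < o := lt_trans hη (e b).2
          refine ⟨e.symm ⟨η, hηo⟩, ?_, ?_⟩
          · have : e (e.symm ⟨η, hηo⟩) < e b := by
              rw [OrderIso.apply_symm_apply]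
              exact Subtype.mk_lt_mk.2 hη
            exact e.lt_iff_lt.1 this
          · simp only [hf, OrderIso.apply_symm_apply]
      have himg2 : f '' {a | b ≤ a} = g '' {ζ | (e b).1 ≤ ζ ∧ ζ < o} := by
        apply Set.eq_of_subset_of_subset
        · rintro x ⟨a, ha, rfl⟩
          exact ⟨(e a).1, ⟨e.monotone ha, (e a).2⟩, rfl⟩
        · rintro x ⟨η, hη, rfl⟩
          refine ⟨e.symm ⟨η, hη.2⟩, ?_, ?_⟩
          · have : e b ≤ e (e.symm ⟨η, hη.2⟩) := by
              rw [OrderIso.apply_symm_apply]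
              exact Subtype.mk_le_mk.2 hη.1
            exact e.le_iff_le.1 this
          · simp only [hf, OrderIso.apply_symm_apply]
      rw [himg1, himg2]
      exact hdisj _ (e b).2
  have h2 := hFr o.ToType f h1
  rw [ho, Cardinal.mk_ord_toType] at h2
  exact absurd h2 (Order.succ_le_iff.not.2 (lt_irrefl κ))

lemma mk_bUnion_ord_le {β : Ordinal.{u}} (f : Ordinal.{u} → Set X) {c : Cardinal.{u}}
    (hc : ℵ₀ ≤ c) (hβ : β.card ≤ c) (h : ∀ η, η < β → #(f η) ≤ c) :
    #(⋃ η ∈ Set.Iio β, f η) ≤ c := by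
  have key := Cardinal.mk_biUnion_le_lift f (Set.Iio β)
  rw [Ordinal.mk_Iio_ordinal, Cardinal.lift_lift] at key
  have hsup : (⨆ x : (Set.Iio β), Cardinal.lift.{u+1} #(f x.1)) ≤ Cardinal.lift.{u+1} c := by
    rcases isEmpty_or_nonempty (Set.Iio β) with hι | hι
    · simp [iSup_of_empty]
    · exact ciSup_le' fun x => Cardinal.lift_le.2 (h x.1 x.2)
  have : Cardinal.lift.{u + 1} #(⋃ η ∈ Set.Iio β, f η) ≤
      Cardinal.lift.{u+1} β.card * Cardinal.lift.{u+1} c := by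
    refine key.trans (mul_le_mul' ?_ hsup)
    simp
  rw [← Cardinal.lift_mul] at this
  have h2 : β.card * c ≤ c := by
    calc β.card * c ≤ c * c := mul_le_mul' hβ le_rfl
      _ = c := Cardinal.mul_eq_self hc
  exact Cardinal.lift_le.1 (this.trans (Cardinal.lift_le.2 h2))

lemma exists_bound_lt_succ_ord (hκ : ℵ₀ ≤ κ) {ι : Type u} (f : ι → Ordinal.{u})
    (hι : #ι ≤ κ) (h : ∀ i, f i < (Order.succ κ).ord) :
    ∃ b, b < (Order.succ κ).ord ∧ ∀ i, f i ≤ b := by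
  refine ⟨⨆ i, f i, ?_, fun i => Ordinal.le_iSup f i⟩
  apply Ordinal.iSup_lt_ord _ h
  rw [(Cardinal.isRegular_succ hκ).cof_eq]
  exact hι.trans_lt (Order.lt_succ κ)

lemma card_lt_succ_ord {ρ : Ordinal.{u}} (h : ρ < (Order.succ κ).ord) : ρ.card ≤ κ := by
  rw [Cardinal.lt_ord] at h
  exact Order.lt_succ_iff.1 h

lemma succ_ord_isLimit (hκ : ℵ₀ ≤ κ) : Order.IsSuccLimit ((Order.succ κ).ord) :=
  Cardinal.isSuccLimit_ord (hκ.trans (Order.le_succ κ))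


lemma mk_image_ord_le (f : Ordinal.{u} → X) (ζ : Ordinal.{u}) :
    #(f '' Set.Iio ζ) ≤ ζ.card := by
  have h := Cardinal.mk_image_le_lift (f := f) (s := Set.Iio ζ)
  rw [Ordinal.mk_Iio_ordinal, Cardinal.lift_lift] at h
  exact (Cardinal.lift_le.1 h)

open Classical in
/-- Bound on the size of `closure B ∩ Y` for small `B`, given closed pseudobases. -/
lemma clb_of_D (hκ : ℵ₀ ≤ κ) {Y : Set X} (Dfam : X → Set (Set X))
    (hD : ∀ x ∈ Y, (∀ W ∈ Dfam x, IsOpen W ∧ x ∈ W) ∧ #(Dfam x) ≤ κ ∧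
      (⋂ W ∈ Dfam x, closure W) ∩ Y = {x})
    (B : Set X) (hB : #B ≤ κ) : #(closure B ∩ Y : Set X) ≤ 2 ^ κ := by
  classical
  set φ : (closure B ∩ Y : Set X) → Set (Set ↥B) :=
    fun y => (fun W => {b : ↥B | (b : X) ∈ W}) '' (Dfam y) with hφ
  have hinj : Function.Injective φ := by
    intro y z hyz
    by_contra hne
    have hvne : (y : X) ≠ (z : X) := fun h => hne (Subtype.ext h)
    have hzY : (z : X) ∈ Y := z.2.2
    have hyY : (y : X) ∈ Y := y.2.2
    -- y is not in the trace of z's pseudobase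
    have hsep : ∃ W₀ ∈ Dfam (z : X), (y : X) ∉ closure W₀ := by
      by_contra hc
      push_neg at hc
      have : (y : X) ∈ (⋂ W ∈ Dfam (z : X), closure W) ∩ Y :=
        ⟨Set.mem_iInter₂.2 hc, hyY⟩
      rw [(hD (z : X) hzY).2.2] at this
      exact hvne this
    obtain ⟨W₀, hW₀mem, hW₀⟩ := hsep
    have htr : {b : ↥B | (b : X) ∈ W₀} ∈ φ y := by
      rw [hyz]; exact ⟨W₀, hW₀mem, rfl⟩
    obtain ⟨W', hW'mem, hW'tr0⟩ := htr
    have hW'tr : {b : ↥B | (b : X) ∈ W'} = {b : ↥B | (b : X) ∈ W₀} := hW'tr0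
    have hyW' : (y : X) ∈ W' := ((hD (y : X) hyY).1 W' hW'mem).2
    have hopen : IsOpen W' := ((hD (y : X) hyY).1 W' hW'mem).1
    have hycl : (y : X) ∈ closure (B ∩ W') := mem_closure_inter y.2.1 hopen hyW'
    have hBW : B ∩ W' = B ∩ W₀ := by
      apply Set.eq_of_subset_of_subset
      · rintro x ⟨hx1, hx2⟩
        have : (⟨x, hx1⟩ : ↥B) ∈ {b : ↥B | (b : X) ∈ W'} := hx2
        rw [hW'tr] at this
        exact ⟨hx1, this⟩
      · rintro x ⟨hx1, hx2⟩
        have : (⟨x, hx1⟩ : ↥B) ∈ {b : ↥B | (b : X) ∈ W₀} := hx2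
        rw [← hW'tr] at this
        exact ⟨hx1, this⟩
    rw [hBW] at hycl
    exact hW₀ (closure_mono Set.inter_subset_right hycl)
  have hrange : ∀ y, φ y ∈ {s : Set (Set ↥B) | s ⊆ Set.univ ∧ #s ≤ κ} := by
    intro y
    refine ⟨Set.subset_univ _, ?_⟩
    exact Cardinal.mk_image_le.trans (hD (y : X) y.2.2).2.1
  have hcount : #{s : Set (Set ↥B) | s ⊆ Set.univ ∧ #s ≤ κ} ≤ 2 ^ κ := by
    apply count_small_subsets hκ
    rw [Cardinal.mk_univ, Cardinal.mk_set]
    exact Cardinal.power_le_power_left two_ne_zero hB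
  have : Function.Injective (fun y => (⟨φ y, hrange y⟩ :
      {s : Set (Set ↥B) | s ⊆ Set.univ ∧ #s ≤ κ})) := by
    intro y z h
    exact hinj (congrArg Subtype.val h)
  exact (Cardinal.mk_le_of_injective this).trans hcount

open Classical in
noncomputable def pickAvoid (Y : Set X) (y₀ : X) (V : Set (Set X)) : X :=
  if h : (Y \ ⋃₀ V).Nonempty then h.choose else y₀

open Classical in
lemma pickAvoid_memY {Y : Set X} {y₀ : X} (hy₀ : y₀ ∈ Y) (V : Set (Set X)) :
    pickAvoid Y y₀ V ∈ Y := by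
  rw [pickAvoid]; split
  · next h => exact h.choose_spec.1
  · exact hy₀

open Classical in
lemma pickAvoid_spec {Y : Set X} {y₀ : X} {V : Set (Set X)}
    (h : (Y \ ⋃₀ V).Nonempty) : pickAvoid Y y₀ V ∉ ⋃₀ V := by
  rw [pickAvoid, dif_pos h]; exact h.choose_spec.2

def Ucat (Dfam : X → Set (Set X)) (P : Set X) : Set (Set X) := ⋃ z : P, Dfam z

noncomputable def Hstep (κ : Cardinal.{u}) (Y : Set X) (Dfam : X → Set (Set X)) (y₀ : X)
    (P : Set X) : Set X :=
  (P ∪ ⋃₀ ((fun B => closure B ∩ Y) '' {B : Set X | B ⊆ P ∧ #B ≤ κ}))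
    ∪ (pickAvoid Y y₀ '' {V : Set (Set X) | V ⊆ Ucat Dfam P ∧ #V ≤ κ})

noncomputable def Hfam (κ : Cardinal.{u}) (Y : Set X) (Dfam : X → Set (Set X)) (y₀ : X) :
    Ordinal.{u} → Set X :=
  Ordinal.lt_wf.fix fun β ih => Hstep κ Y Dfam y₀ (⋃ η : Set.Iio β, ih η.1 η.2)

lemma Hfam_eq (κ : Cardinal.{u}) (Y : Set X) (Dfam : X → Set (Set X)) (y₀ : X)
    (β : Ordinal.{u}) :
    Hfam κ Y Dfam y₀ β = Hstep κ Y Dfam y₀ (⋃ η ∈ Set.Iio β, Hfam κ Y Dfam y₀ η) := by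
  rw [Hfam, WellFounded.fix_eq]
  rw [Set.biUnion_eq_iUnion]

section Core

variable {Y : Set X} {Dfam : X → Set (Set X)} {y₀ : X}

lemma Hfam_subY (hy₀ : y₀ ∈ Y) : ∀ β, Hfam κ Y Dfam y₀ β ⊆ Y := by
  intro β
  induction β using Ordinal.induction with
  | _ β IH =>
    rw [Hfam_eq]
    rintro x ((hx | hx) | hx)
    · obtain ⟨η, hη, hxη⟩ := Set.mem_iUnion₂.1 hx
      exact IH η hη hxη
    · obtain ⟨s, ⟨B, hB, rfl⟩, hxs⟩ := hx
      exact hxs.2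
    · obtain ⟨V, hV, rfl⟩ := hx
      exact pickAvoid_memY hy₀ V

lemma Hfam_mono {η β : Ordinal.{u}} (h : η ≤ β) :
    Hfam κ Y Dfam y₀ η ⊆ Hfam κ Y Dfam y₀ β := by
  rcases eq_or_lt_of_le h with rfl | hlt
  · exact subset_rfl
  · rw [Hfam_eq κ Y Dfam y₀ β]
    intro x hx
    exact Or.inl (Or.inl (Set.mem_biUnion hlt hx))

lemma Hfam_card (hκ : ℵ₀ ≤ κ) (hy₀ : y₀ ∈ Y)
    (hD : ∀ x ∈ Y, (∀ W ∈ Dfam x, IsOpen W ∧ x ∈ W) ∧ #(Dfam x) ≤ κ ∧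
      (⋂ W ∈ Dfam x, closure W) ∩ Y = {x}) :
    ∀ β, β < (Order.succ κ).ord → #(Hfam κ Y Dfam y₀ β) ≤ 2 ^ κ := by
  intro β
  induction β using Ordinal.induction with
  | _ β IH =>
    intro hβ
    rw [Hfam_eq]
    set P : Set X := ⋃ η ∈ Set.Iio β, Hfam κ Y Dfam y₀ η with hP
    have hPcard : #P ≤ 2 ^ κ := by
      apply mk_bUnion_ord_le _ (inf2pow hκ)
        ((card_lt_succ_ord hβ).trans (Cardinal.cantor κ).le)
      intro η hη
      exact IH η hη (hη.trans hβ)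
    have hPY : P ⊆ Y := by
      intro x hx
      obtain ⟨η, hη, hxη⟩ := Set.mem_iUnion₂.1 hx
      exact Hfam_subY hy₀ η hxη
    have hcl : #(⋃₀ ((fun B => closure B ∩ Y) '' {B : Set X | B ⊆ P ∧ #B ≤ κ})) ≤ 2 ^ κ := by
      refine (Cardinal.mk_sUnion_le _).trans ?_
      have h1 : #((fun B => closure B ∩ Y) '' {B : Set X | B ⊆ P ∧ #B ≤ κ}) ≤ 2 ^ κ :=
        Cardinal.mk_image_le.trans (count_small_subsets hκ P hPcard)
      have h2 : (⨆ s : ↥((fun B => closure B ∩ Y) '' {B : Set X | B ⊆ P ∧ #B ≤ κ}), #s.1) ≤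
          2 ^ κ := by
        apply ciSup_le_card
        rintro ⟨s, B, hB, rfl⟩
        exact clb_of_D hκ Dfam hD B hB.2
      calc _ ≤ (2^κ) * (2^κ) := mul_le_mul' h1 h2
        _ = 2 ^ κ := Cardinal.mul_eq_self (inf2pow hκ)
    have hUcat : #(Ucat Dfam P) ≤ 2 ^ κ := by
      apply mk_iUnion_le' _ (inf2pow hκ) hPcard
      intro z
      exact ((hD z (hPY z.2)).2.1).trans (Cardinal.cantor κ).le
    have hav : #(pickAvoid Y y₀ '' {V : Set (Set X) | V ⊆ Ucat Dfam P ∧ #V ≤ κ}) ≤ 2 ^ κ :=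
      Cardinal.mk_image_le.trans (count_small_subsets hκ _ hUcat)
    refine (Cardinal.mk_union_le _ _).trans ?_
    have hone : #((P ∪ ⋃₀ ((fun B => closure B ∩ Y) '' {B : Set X | B ⊆ P ∧ #B ≤ κ}) : Set X)) ≤ 2^κ := by
      refine (Cardinal.mk_union_le _ _).trans ?_
      calc _ ≤ (2:Cardinal.{u})^κ + 2^κ := add_le_add hPcard hcl
        _ = 2 ^ κ := Cardinal.add_eq_self (inf2pow hκ)
    calc _ ≤ (2:Cardinal.{u})^κ + 2^κ := add_le_add hone hav
      _ = 2 ^ κ := Cardinal.add_eq_self (inf2pow hκ)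

end Core
noncomputable def Hful (κ : Cardinal.{u}) (Y : Set X) (Dfam : X → Set (Set X)) (y₀ : X) :
    Set X :=
  ⋃ β ∈ Set.Iio ((Order.succ κ).ord), Hfam κ Y Dfam y₀ β

section Core2
variable {Y : Set X} {Dfam : X → Set (Set X)} {y₀ : X}

lemma Hful_subY (hy₀ : y₀ ∈ Y) : Hful κ Y Dfam y₀ ⊆ Y := by
  intro x hx
  obtain ⟨β, hβ, hxβ⟩ := Set.mem_iUnion₂.1 hx
  exact Hfam_subY hy₀ β hxβ

lemma Hful_card (hκ : ℵ₀ ≤ κ) (hy₀ : y₀ ∈ Y)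
    (hD : ∀ x ∈ Y, (∀ W ∈ Dfam x, IsOpen W ∧ x ∈ W) ∧ #(Dfam x) ≤ κ ∧
      (⋂ W ∈ Dfam x, closure W) ∩ Y = {x}) :
    #(Hful κ Y Dfam y₀) ≤ 2 ^ κ := by
  apply mk_bUnion_ord_le _ (inf2pow hκ)
  · rw [Cardinal.card_ord]
    exact succ_le_2pow
  · exact Hfam_card hκ hy₀ hD

lemma stage_of (hκ : ℵ₀ ≤ κ) {B : Set X} (hB : B ⊆ Hful κ Y Dfam y₀) (hBc : #B ≤ κ) :
    ∃ β, β < (Order.succ κ).ord ∧ B ⊆ Hfam κ Y Dfam y₀ β := by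
  have h1 : ∀ b : ↥B, ∃ β, β < (Order.succ κ).ord ∧ (b : X) ∈ Hfam κ Y Dfam y₀ β := by
    intro b
    obtain ⟨β, hβ, hbβ⟩ := Set.mem_iUnion₂.1 (hB b.2)
    exact ⟨β, hβ, hbβ⟩
  choose st h1 h2 using h1
  obtain ⟨β, hβ, hle⟩ := exists_bound_lt_succ_ord hκ st hBc h1
  refine ⟨β, hβ, ?_⟩
  intro x hx
  exact Hfam_mono (hle ⟨x, hx⟩) (h2 ⟨x, hx⟩)

lemma cl_absorb (hκ : ℵ₀ ≤ κ) {B : Set X} (hB : B ⊆ Hful κ Y Dfam y₀) (hBc : #B ≤ κ) :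
    closure B ∩ Y ⊆ Hful κ Y Dfam y₀ := by
  obtain ⟨β, hβ, hsub⟩ := stage_of hκ hB hBc
  have hmem : closure B ∩ Y ⊆ Hfam κ Y Dfam y₀ (β + 1) := by
    rw [Hfam_eq]
    intro x hx
    refine Or.inl (Or.inr ?_)
    refine ⟨closure B ∩ Y, ⟨B, ⟨?_, hBc⟩, rfl⟩, hx⟩
    intro b hb
    have hββ : β < β + 1 := by
      rw [Ordinal.add_one_eq_succ]; exact Order.lt_succ β
    exact Set.mem_biUnion hββ (hsub hb)
  intro x hx
  have hβ1 : β + 1 < (Order.succ κ).ord := by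
    rw [Ordinal.add_one_eq_succ]
    exact (succ_ord_isLimit hκ).succ_lt hβ
  exact Set.mem_biUnion hβ1 (hmem hx)

lemma avoid_absorb (hκ : ℵ₀ ≤ κ) {V : Set (Set X)} (hVc : #V ≤ κ)
    (hVm : ∀ W ∈ V, ∃ z ∈ Hful κ Y Dfam y₀, W ∈ Dfam z) :
    pickAvoid Y y₀ V ∈ Hful κ Y Dfam y₀ := by
  have h1 : ∀ w : ↥V, ∃ β, β < (Order.succ κ).ord ∧
      ∃ z ∈ Hfam κ Y Dfam y₀ β, (w : Set X) ∈ Dfam z := by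
    intro w
    obtain ⟨z, hz, hwz⟩ := hVm w w.2
    obtain ⟨β, hβ, hzβ⟩ := Set.mem_iUnion₂.1 hz
    exact ⟨β, hβ, z, hzβ, hwz⟩
  choose st h1 h2 using h1
  obtain ⟨β, hβ, hle⟩ := exists_bound_lt_succ_ord hκ st hVc h1
  have hβ1 : β + 1 < (Order.succ κ).ord := by
    rw [Ordinal.add_one_eq_succ]
    exact (succ_ord_isLimit hκ).succ_lt hβ
  have hmem : pickAvoid Y y₀ V ∈ Hfam κ Y Dfam y₀ (β + 1) := by
    rw [Hfam_eq]
    refine Or.inr ⟨V, ⟨?_, hVc⟩, rfl⟩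
    intro W hW
    obtain ⟨z, hz, hWz⟩ := h2 ⟨W, hW⟩
    have hzP : z ∈ ⋃ η ∈ Set.Iio (β + 1), Hfam κ Y Dfam y₀ η := by
      have hββ : β < β + 1 := by
        rw [Ordinal.add_one_eq_succ]; exact Order.lt_succ β
      exact Set.mem_biUnion hββ (Hfam_mono (hle ⟨W, hW⟩) hz)
    exact Set.mem_iUnion.2 ⟨⟨z, hzP⟩, hWz⟩
  exact Set.mem_biUnion hβ1 hmem

end Core2

open Classical in
noncomputable def Wq (Dfam : X → Set (Set X)) (q : X) (z : X) : Set X :=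
  if h : ∃ W ∈ Dfam z, q ∉ closure W then h.choose else Set.univ

open Classical in
lemma Wq_spec {Y : Set X} {Dfam : X → Set (Set X)}
    (hD : ∀ x ∈ Y, (∀ W ∈ Dfam x, IsOpen W ∧ x ∈ W) ∧ #(Dfam x) ≤ κ ∧
      (⋂ W ∈ Dfam x, closure W) ∩ Y = {x})
    {q z : X} (hq : q ∈ Y) (hz : z ∈ Y) (hne : q ≠ z) :
    Wq Dfam q z ∈ Dfam z ∧ q ∉ closure (Wq Dfam q z) := by
  have hex : ∃ W ∈ Dfam z, q ∉ closure W := by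
    by_contra hc
    push_neg at hc
    have : q ∈ (⋂ W ∈ Dfam z, closure W) ∩ Y := ⟨Set.mem_iInter₂.2 hc, hq⟩
    rw [(hD z hz).2.2] at this
    exact hne this
  rw [Wq, dif_pos hex]
  exact ⟨hex.choose_spec.1, hex.choose_spec.2⟩

open Classical in
noncomputable def Tsel (κ : Cardinal.{u}) (Y : Set X) (Wfun : X → Set X) (B : Set X) :
    Set X :=
  if h : ∃ T : Set X, T ⊆ closure B ∩ Y ∧ #T ≤ κ ∧ closure B ∩ Y ⊆ ⋃ z ∈ T, Wfun z
  then h.choose else ∅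

open Classical in
lemma Tsel_spec {Y : Set X} {Wfun : X → Set X} {B : Set X}
    (h : ∃ T : Set X, T ⊆ closure B ∩ Y ∧ #T ≤ κ ∧ closure B ∩ Y ⊆ ⋃ z ∈ T, Wfun z) :
    Tsel κ Y Wfun B ⊆ closure B ∩ Y ∧ #(Tsel κ Y Wfun B) ≤ κ ∧
      closure B ∩ Y ⊆ ⋃ z ∈ Tsel κ Y Wfun B, Wfun z := by
  rw [Tsel, dif_pos h]
  exact h.choose_spec

open Classical in
noncomputable def asel (κ : Cardinal.{u}) (Y : Set X) (Dfam : X → Set (Set X)) (y₀ q : X) :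
    Ordinal.{u} → X :=
  Ordinal.lt_wf.fix fun ζ ih =>
    pickAvoid Y y₀ (⋃ η ∈ Set.Iio (ζ + 1),
      (Wq Dfam q) '' (Tsel κ Y (Wq Dfam q)
        ((fun j => if h : j < ζ then ih j h else y₀) '' Set.Iio η)))

noncomputable def Vcal (κ : Cardinal.{u}) (Y : Set X) (Dfam : X → Set (Set X)) (y₀ q : X)
    (ζ : Ordinal.{u}) : Set (Set X) :=
  ⋃ η ∈ Set.Iio (ζ + 1),
    (Wq Dfam q) '' (Tsel κ Y (Wq Dfam q) (asel κ Y Dfam y₀ q '' Set.Iio η))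

open Classical in
lemma asel_eq (κ : Cardinal.{u}) (Y : Set X) (Dfam : X → Set (Set X)) (y₀ q : X)
    (ζ : Ordinal.{u}) :
    asel κ Y Dfam y₀ q ζ = pickAvoid Y y₀ (Vcal κ Y Dfam y₀ q ζ) := by
  rw [asel, WellFounded.fix_eq]
  rw [Vcal]
  congr 1
  apply Set.iUnion₂_congr
  intro η hη
  refine congrArg (Set.image (Wq Dfam q)) ?_
  refine congrArg (Tsel κ Y (Wq Dfam q)) ?_
  apply Set.image_congr
  intro j hj
  have hjζ : j < ζ := by
    have hηζ : η ≤ ζ := by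
      rw [Ordinal.add_one_eq_succ] at hη
      exact Order.lt_succ_iff.1 hη
    exact lt_of_lt_of_le hj hηζ
  rw [dif_pos hjζ]
  rfl

section Core3
variable {Y : Set X} {Dfam : X → Set (Set X)} {y₀ q : X}

lemma guard_at (hκ : ℵ₀ ≤ κ)
    (hD : ∀ x ∈ Y, (∀ W ∈ Dfam x, IsOpen W ∧ x ∈ W) ∧ #(Dfam x) ≤ κ ∧
      (⋂ W ∈ Dfam x, closure W) ∩ Y = {x})
    (hCOV : ∀ B : Set X, B ⊆ Y → #B ≤ κ → ∀ Wfun : X → Set X,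
      (∀ z ∈ closure B ∩ Y, z ∈ Wfun z ∧ IsOpen (Wfun z)) →
      ∃ T : Set X, T ⊆ closure B ∩ Y ∧ #T ≤ κ ∧ closure B ∩ Y ⊆ ⋃ z ∈ T, Wfun z)
    (hy₀ : y₀ ∈ Y) (hq : q ∈ Y) (hqH : q ∉ Hful κ Y Dfam y₀)
    {η : Ordinal.{u}} (hη : η < (Order.succ κ).ord)
    (hall : ∀ ε, ε < η → asel κ Y Dfam y₀ q ε ∈ Hful κ Y Dfam y₀) :
    (closure (asel κ Y Dfam y₀ q '' Set.Iio η) ∩ Y ⊆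
        ⋃₀ ((Wq Dfam q) '' (Tsel κ Y (Wq Dfam q) (asel κ Y Dfam y₀ q '' Set.Iio η)))) ∧
    (∀ W ∈ (Wq Dfam q) '' (Tsel κ Y (Wq Dfam q) (asel κ Y Dfam y₀ q '' Set.Iio η)),
        IsOpen W ∧ q ∉ closure W ∧ ∃ z ∈ Hful κ Y Dfam y₀, W ∈ Dfam z) ∧
    #((Wq Dfam q) '' (Tsel κ Y (Wq Dfam q) (asel κ Y Dfam y₀ q '' Set.Iio η))) ≤ κ := by
  set B := asel κ Y Dfam y₀ q '' Set.Iio η with hBdef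
  have hBH : B ⊆ Hful κ Y Dfam y₀ := by
    rintro x ⟨ε, hε, rfl⟩
    exact hall ε hε
  have hBY : B ⊆ Y := hBH.trans (Hful_subY hy₀)
  have hBc : #B ≤ κ := (mk_image_ord_le _ _).trans (card_lt_succ_ord hη)
  have hclH : closure B ∩ Y ⊆ Hful κ Y Dfam y₀ := cl_absorb hκ hBH hBc
  have hqcl : q ∉ closure B := fun hc => hqH (hclH ⟨hc, hq⟩)
  have hWp : ∀ z ∈ closure B ∩ Y, z ∈ Wq Dfam q z ∧ IsOpen (Wq Dfam q z) := by
    intro z hz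
    have hne : q ≠ z := fun h => hqcl (h ▸ hz.1)
    have hw := Wq_spec hD hq hz.2 hne
    exact ⟨((hD z hz.2).1 _ hw.1).2, ((hD z hz.2).1 _ hw.1).1⟩
  have hex := hCOV B hBY hBc (Wq Dfam q) hWp
  obtain ⟨hT1, hT2, hT3⟩ := Tsel_spec hex
  refine ⟨?_, ?_, ?_⟩
  · intro x hx
    rw [Set.sUnion_image]
    exact hT3 hx
  · rintro W ⟨z, hzT, rfl⟩
    have hz : z ∈ closure B ∩ Y := hT1 hzT
    have hne : q ≠ z := fun h => hqcl (h ▸ hz.1)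
    obtain ⟨hmem, hqW⟩ := Wq_spec hD hq hz.2 hne
    exact ⟨((hD z hz.2).1 _ hmem).1, hqW, ⟨z, hclH hz, hmem⟩⟩
  · exact Cardinal.mk_image_le.trans hT2

lemma asel_inv (hκ : ℵ₀ ≤ κ)
    (hD : ∀ x ∈ Y, (∀ W ∈ Dfam x, IsOpen W ∧ x ∈ W) ∧ #(Dfam x) ≤ κ ∧
      (⋂ W ∈ Dfam x, closure W) ∩ Y = {x})
    (hCOV : ∀ B : Set X, B ⊆ Y → #B ≤ κ → ∀ Wfun : X → Set X,
      (∀ z ∈ closure B ∩ Y, z ∈ Wfun z ∧ IsOpen (Wfun z)) →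
      ∃ T : Set X, T ⊆ closure B ∩ Y ∧ #T ≤ κ ∧ closure B ∩ Y ⊆ ⋃ z ∈ T, Wfun z)
    (hy₀ : y₀ ∈ Y) (hq : q ∈ Y) (hqH : q ∉ Hful κ Y Dfam y₀) :
    ∀ ζ, ζ < (Order.succ κ).ord → asel κ Y Dfam y₀ q ζ ∈ Hful κ Y Dfam y₀ ∧
      asel κ Y Dfam y₀ q ζ ∉ ⋃₀ Vcal κ Y Dfam y₀ q ζ := by
  intro ζ
  induction ζ using Ordinal.induction with
  | _ ζ IH =>
    intro hζ
    have hζ1 : ζ + 1 < (Order.succ κ).ord := by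
      rw [Ordinal.add_one_eq_succ]
      exact (succ_ord_isLimit hκ).succ_lt hζ
    have hfacts : ∀ η, η < ζ + 1 →
        (closure (asel κ Y Dfam y₀ q '' Set.Iio η) ∩ Y ⊆
          ⋃₀ ((Wq Dfam q) '' (Tsel κ Y (Wq Dfam q) (asel κ Y Dfam y₀ q '' Set.Iio η)))) ∧
        (∀ W ∈ (Wq Dfam q) '' (Tsel κ Y (Wq Dfam q) (asel κ Y Dfam y₀ q '' Set.Iio η)),
          IsOpen W ∧ q ∉ closure W ∧ ∃ z ∈ Hful κ Y Dfam y₀, W ∈ Dfam z) ∧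
        #((Wq Dfam q) '' (Tsel κ Y (Wq Dfam q) (asel κ Y Dfam y₀ q '' Set.Iio η))) ≤ κ := by
      intro η hη
      have hηζ : η ≤ ζ := by
        rw [Ordinal.add_one_eq_succ] at hη
        exact Order.lt_succ_iff.1 hη
      refine guard_at hκ hD hCOV hy₀ hq hqH (lt_of_le_of_lt hηζ hζ) ?_
      intro ε hε
      exact (IH ε (lt_of_lt_of_le hε hηζ) ((lt_of_lt_of_le hε hηζ).trans hζ)).1
    have hVm : ∀ W ∈ Vcal κ Y Dfam y₀ q ζ,
        IsOpen W ∧ q ∉ closure W ∧ ∃ z ∈ Hful κ Y Dfam y₀, W ∈ Dfam z := by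
      intro W hW
      obtain ⟨η, hη, hWη⟩ := Set.mem_iUnion₂.1 hW
      exact (hfacts η hη).2.1 W hWη
    have hVc : #(Vcal κ Y Dfam y₀ q ζ) ≤ κ := by
      rw [Vcal]
      letI : TopologicalSpace (Set X) := ⊥
      apply mk_bUnion_ord_le _ hκ (card_lt_succ_ord hζ1)
      intro η hη
      exact (hfacts η hη).2.2
    have hqV : q ∉ ⋃₀ Vcal κ Y Dfam y₀ q ζ := by
      rintro ⟨W, hWV, hqW⟩
      exact (hVm W hWV).2.1 (subset_closure hqW)
    have hne : (Y \ ⋃₀ Vcal κ Y Dfam y₀ q ζ).Nonempty := ⟨q, hq, hqV⟩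
    constructor
    · rw [asel_eq]
      apply avoid_absorb hκ hVc
      intro W hW
      exact (hVm W hW).2.2
    · rw [asel_eq]
      exact pickAvoid_spec hne

theorem core (hκ : ℵ₀ ≤ κ) {Y : Set X} (Dfam : X → Set (Set X))
    (hD : ∀ x ∈ Y, (∀ W ∈ Dfam x, IsOpen W ∧ x ∈ W) ∧ #(Dfam x) ≤ κ ∧
      (⋂ W ∈ Dfam x, closure W) ∩ Y = {x})
    (hCOV : ∀ B : Set X, B ⊆ Y → #B ≤ κ → ∀ Wfun : X → Set X,
      (∀ z ∈ closure B ∩ Y, z ∈ Wfun z ∧ IsOpen (Wfun z)) →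
      ∃ T : Set X, T ⊆ closure B ∩ Y ∧ #T ≤ κ ∧ closure B ∩ Y ⊆ ⋃ z ∈ T, Wfun z)
    (hFR : ∀ g : Ordinal.{u} → X, (∀ ζ, ζ < (Order.succ κ).ord → g ζ ∈ Y) →
      (∀ β, β < (Order.succ κ).ord → Disjoint (closure (g '' Set.Iio β) ∩ Y)
        (closure (g '' {ζ | β ≤ ζ ∧ ζ < (Order.succ κ).ord}) ∩ Y)) → False) :
    #Y ≤ 2 ^ κ := by
  rcases Y.eq_empty_or_nonempty with rfl | ⟨y₀, hy₀⟩
  · simp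
  have hmain : Y ⊆ Hful κ Y Dfam y₀ := by
    intro q hq
    by_contra hqH
    apply hFR (asel κ Y Dfam y₀ q)
    · intro ζ hζ
      exact Hful_subY hy₀ ((asel_inv hκ hD hCOV hy₀ hq hqH ζ hζ).1)
    · intro β hβ
      have hfacts := guard_at hκ hD hCOV hy₀ hq hqH hβ
        (fun ε hε => (asel_inv hκ hD hCOV hy₀ hq hqH ε (hε.trans hβ)).1)
      set Wf := (Wq Dfam q) '' (Tsel κ Y (Wq Dfam q) (asel κ Y Dfam y₀ q '' Set.Iio β))
        with hWf
      have hGopen : IsOpen (⋃₀ Wf) := isOpen_sUnion (fun W hW => (hfacts.2.1 W hW).1)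
      have htail : ∀ x ∈ asel κ Y Dfam y₀ q ''
          {ζ | β ≤ ζ ∧ ζ < (Order.succ κ).ord}, x ∉ ⋃₀ Wf := by
        rintro x ⟨ρ, ⟨hρ1, hρ2⟩, rfl⟩ hx
        have hsub : ⋃₀ Wf ⊆ ⋃₀ Vcal κ Y Dfam y₀ q ρ := by
          apply Set.sUnion_subset_sUnion
          rw [Vcal]
          have hβρ : β ∈ Set.Iio (ρ + 1) := by
            rw [Set.mem_Iio, Ordinal.add_one_eq_succ]
            exact Order.lt_succ_iff.2 hρ1
          have := Set.subset_biUnion_of_mem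
            (u := fun η => (Wq Dfam q) '' (Tsel κ Y (Wq Dfam q)
              (asel κ Y Dfam y₀ q '' Set.Iio η))) hβρ
          exact this
        exact (asel_inv hκ hD hCOV hy₀ hq hqH ρ hρ2).2 (hsub hx)
      have hclt : closure (asel κ Y Dfam y₀ q ''
          {ζ | β ≤ ζ ∧ ζ < (Order.succ κ).ord}) ⊆ (⋃₀ Wf)ᶜ :=
        closure_minimal (fun x hx => htail x hx) hGopen.isClosed_compl
      rw [Set.disjoint_left]
      intro x hx1 hx2
      exact (hclt hx2.1) (hfacts.1 hx1)
  refine (Cardinal.mk_le_mk_of_subset hmain).trans (Hful_card hκ hy₀ hD)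

end Core3


/-- Extracting a small subfamily of pointed neighbourhoods covering `closure B ∩ Y`,
using the Lindelöf property of an auxiliary subspace `Z`. -/
lemma cov_of_L {Y Z B : Set X} (hLZ : LindelofLE Z κ)
    (h1 : closure B ∩ Y ⊆ Z) (h2 : closure B ∩ Z ⊆ closure B ∩ Y)
    (Wfun : X → Set X) (hW : ∀ z ∈ closure B ∩ Y, z ∈ Wfun z ∧ IsOpen (Wfun z)) :
    ∃ T : Set X, T ⊆ closure B ∩ Y ∧ #T ≤ κ ∧ closure B ∩ Y ⊆ ⋃ z ∈ T, Wfun z := by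
  classical
  rcases (closure B ∩ Y).eq_empty_or_nonempty with he | hne
  · refine ⟨∅, by simp, by simp, by rw [he]; exact Set.empty_subset _⟩
  obtain ⟨z₀, hz₀⟩ := hne
  obtain ⟨V, hVsub, hVc, hVcov⟩ := hLZ (insert (closure B)ᶜ (Wfun '' (closure B ∩ Y)))
    (by
      rintro u hu
      rcases Set.mem_insert_iff.1 hu with h | ⟨z, hz, h⟩
      · rw [h]; exact isClosed_closure.isOpen_compl
      · rw [← h]; exact (hW z hz).2)
    (by
      intro z hz
      by_cases hzB : z ∈ closure B
      · have hzY : z ∈ closure B ∩ Y := h2 ⟨hzB, hz⟩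
        exact ⟨Wfun z, Set.mem_insert_of_mem _ ⟨z, hzY, rfl⟩, (hW z hzY).1⟩
      · exact ⟨(closure B)ᶜ, Set.mem_insert _ _, hzB⟩)
  set sel : Set X → X := fun v =>
    if h : ∃ z ∈ closure B ∩ Y, Wfun z = v then h.choose else z₀ with hsel
  have hselspec : ∀ v, (∃ z ∈ closure B ∩ Y, Wfun z = v) →
      sel v ∈ closure B ∩ Y ∧ Wfun (sel v) = v := by
    intro v hv
    rw [hsel]; dsimp only; rw [dif_pos hv]
    exact ⟨hv.choose_spec.1, hv.choose_spec.2⟩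
  refine ⟨sel '' {v ∈ V | ∃ z ∈ closure B ∩ Y, Wfun z = v}, ?_, ?_, ?_⟩
  · rintro x ⟨v, ⟨hvV, hv⟩, rfl⟩
    exact (hselspec v hv).1
  · refine Cardinal.mk_image_le.trans ?_
    exact (Cardinal.mk_le_mk_of_subset (Set.sep_subset _ _)).trans hVc
  · intro x hx
    obtain ⟨v, hvV, hxv⟩ := hVcov (h1 hx)
    have hvne : v ≠ (closure B)ᶜ := by
      intro h
      rw [h] at hxv
      exact hxv hx.1
    have hvim : ∃ z ∈ closure B ∩ Y, Wfun z = v := by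
      rcases Set.mem_insert_iff.1 (hVsub hvV) with h | ⟨z, hz, h⟩
      · exact absurd h hvne
      · exact ⟨z, hz, h⟩
    refine Set.mem_biUnion ⟨v, ⟨hvV, hvim⟩, rfl⟩ ?_
    rw [(hselspec v hvim).2]
    exact hxv


/-- The single-subspace bound: a T2-subspace with small free sequences, pseudocharacter
and Lindelöf number has size at most `2 ^ κ`. -/
theorem piece_bound [T2Space X] (hκ : ℵ₀ ≤ κ) {Y : Set X}
    (hFr : FreeLE Y κ) (hψp : PseudoLE Y κ) (hLp : LindelofLE Y κ) : #Y ≤ 2 ^ κ := by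
  classical
  have hA : ∀ x : X, ∃ C : Set (Set X), x ∈ Y →
      ((∀ W ∈ C, IsOpen W ∧ x ∈ W) ∧ #C ≤ κ ∧ (⋂ W ∈ C, closure W) ∩ Y = {x}) := by
    intro x
    by_cases hx : x ∈ Y
    · obtain ⟨C, h1, h2, h3⟩ := lemmaA hκ hψp hLp hx
      exact ⟨C, fun _ => ⟨h1, h2, h3⟩⟩
    · exact ⟨∅, fun h => absurd h hx⟩
  choose Dfam hDfam using hA
  apply core hκ Dfam (fun x hx => hDfam x hx)
  · intro B hBY hBc Wfun hW
    exact cov_of_L hLp (Set.inter_subset_right) (fun x hx => ⟨hx.1, hx.2⟩) Wfun hW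
  · intro g hmem hdisj
    exact no_long_free hκ hFr g hmem hdisj

/-- Global closure bound: closures of `κ`-small sets are `2 ^ κ`-small, via
level-wise closed pseudobases. -/
lemma clb_global (hκ : ℵ₀ ≤ κ) (CA : X → Set (Set X)) (lvl : X → Ordinal.{u})
    (Zs : Ordinal.{u} → Set X)
    (hCA : ∀ y : X, (∀ W ∈ CA y, IsOpen W ∧ y ∈ W) ∧ #(CA y) ≤ κ ∧
      (⋂ W ∈ CA y, closure W) ∩ Zs (lvl y) = {y})
    (hcomp : ∀ y z : X, lvl y ≤ lvl z → y ∈ Zs (lvl z))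
    (B : Set X) (hB : #B ≤ κ) : #(closure B) ≤ 2 ^ κ := by
  classical
  set φ : ↥(closure B) → Set (Set ↥B) :=
    fun y => (fun W => {b : ↥B | (b : X) ∈ W}) '' (CA (y : X)) with hφ
  have key : ∀ y z : ↥(closure B), φ y = φ z → (y : X) ≠ (z : X) →
      (y : X) ∈ Zs (lvl (z : X)) → False := by
    intro y z hyz hne hyZ
    have hsep : ∃ W₀ ∈ CA (z : X), (y : X) ∉ closure W₀ := by
      by_contra hc
      push_neg at hc
      have : (y : X) ∈ (⋂ W ∈ CA (z : X), closure W) ∩ Zs (lvl (z : X)) :=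
        ⟨Set.mem_iInter₂.2 hc, hyZ⟩
      rw [(hCA (z : X)).2.2] at this
      exact hne this
    obtain ⟨W₀, hW₀mem, hW₀⟩ := hsep
    have htr : {b : ↥B | (b : X) ∈ W₀} ∈ φ y := by
      rw [hyz]; exact ⟨W₀, hW₀mem, rfl⟩
    obtain ⟨W', hW'mem, hW'tr0⟩ := htr
    have hW'tr : {b : ↥B | (b : X) ∈ W'} = {b : ↥B | (b : X) ∈ W₀} := hW'tr0
    have hyW' : (y : X) ∈ W' := ((hCA (y : X)).1 W' hW'mem).2
    have hopen : IsOpen W' := ((hCA (y : X)).1 W' hW'mem).1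
    have hycl : (y : X) ∈ closure (B ∩ W') := mem_closure_inter y.2 hopen hyW'
    have hBW : B ∩ W' = B ∩ W₀ := by
      apply Set.eq_of_subset_of_subset
      · rintro x ⟨hx1, hx2⟩
        have hmm : (⟨x, hx1⟩ : ↥B) ∈ {b : ↥B | (b : X) ∈ W'} := hx2
        rw [hW'tr] at hmm
        exact ⟨hx1, hmm⟩
      · rintro x ⟨hx1, hx2⟩
        have hmm : (⟨x, hx1⟩ : ↥B) ∈ {b : ↥B | (b : X) ∈ W₀} := hx2
        rw [← hW'tr] at hmm
        exact ⟨hx1, hmm⟩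
    rw [hBW] at hycl
    exact hW₀ (closure_mono Set.inter_subset_right hycl)
  have hinj : Function.Injective φ := by
    intro y z hyz
    by_contra hne
    have hvne : (y : X) ≠ (z : X) := fun h => hne (Subtype.ext h)
    rcases le_total (lvl (y : X)) (lvl (z : X)) with hc | hc
    · exact key y z hyz hvne (hcomp _ _ hc)
    · exact key z y hyz.symm hvne.symm (hcomp _ _ hc)
  have hrange : ∀ y, φ y ∈ {s : Set (Set ↥B) | s ⊆ Set.univ ∧ #s ≤ κ} := by
    intro y
    exact ⟨Set.subset_univ _, Cardinal.mk_image_le.trans (hCA (y : X)).2.1⟩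
  have hcount : #{s : Set (Set ↥B) | s ⊆ Set.univ ∧ #s ≤ κ} ≤ 2 ^ κ := by
    apply count_small_subsets hκ
    rw [Cardinal.mk_univ, Cardinal.mk_set]
    exact Cardinal.power_le_power_left two_ne_zero hB
  have hinj2 : Function.Injective (fun y => (⟨φ y, hrange y⟩ :
      {s : Set (Set ↥B) | s ⊆ Set.univ ∧ #s ≤ κ})) := by
    intro y z h
    exact hinj (congrArg Subtype.val h)
  exact (Cardinal.mk_le_of_injective hinj2).trans hcount

lemma lt_add_one_ord (x : Ordinal.{u}) : x < x + 1 := by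
  rw [Ordinal.add_one_eq_succ]; exact Order.lt_succ x

lemma mem_Iio_add_one {η ζ : Ordinal.{u}} : η ∈ Set.Iio (ζ + 1) ↔ η ≤ ζ := by
  rw [Set.mem_Iio, Ordinal.add_one_eq_succ, Order.lt_succ_iff]

/-- In the unbounded-chain situation, every point has a global `κ`-sized closed
pseudobase. -/
lemma all_good [T2Space X] (hκ : ℵ₀ ≤ κ) {lam : Ordinal.{u}} {Xs : Ordinal.{u} → Set X}
    (hmono' : ∀ α β : Ordinal.{u}, α ≤ β → β < lam → Xs α ⊆ Xs β)
    (hF : ∀ α < lam, FreeLE (Xs α) κ)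
    (hψ : ∀ α < lam, PseudoLE (Xs α) κ)
    (hL : ∀ α < lam, LindelofLE (Xs α) κ)
    (lev : X → Ordinal.{u}) (hlev1 : ∀ x, lev x < lam) (hlev2 : ∀ x, x ∈ Xs (lev x))
    (hS : ∀ S : Set X, #S ≤ 2 ^ κ → ∃ γ, γ < lam ∧ S ⊆ Xs γ)
    (q : X) :
    ∃ C : Set (Set X), (∀ W ∈ C, IsOpen W ∧ q ∈ W) ∧ #C ≤ κ ∧
      (⋂ W ∈ C, closure W) = {q} := by
  classical
  by_contra hBAD
  have hclb : ∀ B : Set X, #B ≤ κ → #(closure B) ≤ 2 ^ κ := by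
    have hA : ∀ y : X, ∃ C : Set (Set X), (∀ W ∈ C, IsOpen W ∧ y ∈ W) ∧ #C ≤ κ ∧
        (⋂ W ∈ C, closure W) ∩ Xs (lev y) = {y} :=
      fun y => lemmaA hκ (hψ _ (hlev1 y)) (hL _ (hlev1 y)) (hlev2 y)
    choose CA h1 h2 h3 using hA
    intro B hB
    exact clb_global hκ CA lev Xs (fun y => ⟨h1 y, h2 y, h3 y⟩)
      (fun y z h => hmono' _ _ h (hlev1 z) (hlev2 y)) B hB
  have hCAq0 : ∀ γ : Ordinal.{u}, ∃ C : Set (Set X),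
      (∀ W ∈ C, IsOpen W ∧ q ∈ W) ∧ #C ≤ κ ∧
      ((γ < lam ∧ lev q ≤ γ) → (⋂ W ∈ C, closure W) ∩ Xs γ = {q}) := by
    intro γ
    by_cases h : γ < lam ∧ lev q ≤ γ
    · have hqγ : q ∈ Xs γ := hmono' _ _ h.2 h.1 (hlev2 q)
      obtain ⟨C, h1, h2, h3⟩ := lemmaA hκ (hψ _ h.1) (hL _ h.1) hqγ
      exact ⟨C, h1, h2, fun _ => h3⟩
    · refine ⟨∅, by simp, by simp, fun hc => absurd hc h⟩
  choose CAq hCAq1 hCAq2 hCAq3 using hCAq0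
  have hUNB : ∀ D : Set (Set X), (∀ W ∈ D, IsOpen W ∧ q ∈ W) → #D ≤ κ →
      ∀ γ, γ < lam → ∃ x, x ∈ (⋂ W ∈ D, closure W) ∧ x ∉ Xs γ := by
    intro D hD hDc γ hγ
    by_contra hc
    push_neg at hc
    have hγ2lam : max γ (lev q) < lam := max_lt hγ (hlev1 q)
    apply hBAD
    refine ⟨D ∪ CAq (max γ (lev q)), ?_, ?_, ?_⟩
    · intro W hW
      rcases hW with hW | hW
      · exact hD W hW
      · exact hCAq1 _ W hW
    · refine (Cardinal.mk_union_le _ _).trans ?_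
      calc #D + #(CAq (max γ (lev q))) ≤ κ + κ := add_le_add hDc (hCAq2 _)
        _ = κ := Cardinal.add_eq_self hκ
    · apply Set.eq_of_subset_of_subset
      · intro z hz
        have hz1 : z ∈ ⋂ W ∈ D, closure W :=
          Set.mem_iInter₂.2 fun W hW => Set.mem_iInter₂.1 hz W (Or.inl hW)
        have hz2 : z ∈ ⋂ W ∈ CAq (max γ (lev q)), closure W :=
          Set.mem_iInter₂.2 fun W hW => Set.mem_iInter₂.1 hz W (Or.inr hW)
        have hzX : z ∈ Xs (max γ (lev q)) :=
          hmono' _ _ (le_max_left _ _) hγ2lam (hc z hz1)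
        have hfin : z ∈ (⋂ W ∈ CAq (max γ (lev q)), closure W) ∩ Xs (max γ (lev q)) :=
          ⟨hz2, hzX⟩
        rw [hCAq3 _ ⟨hγ2lam, le_max_right _ _⟩] at hfin
        exact hfin
      · intro z hz
        have hzq : z = q := hz
        subst hzq
        refine Set.mem_iInter₂.2 fun W hW => ?_
        rcases hW with hW | hW
        · exact subset_closure (hD W hW).2
        · exact subset_closure (hCAq1 _ W hW).2
  have hlevCh : ∀ S : Set X, #S ≤ κ → ∃ γ, γ < lam ∧ lev q ≤ γ ∧ closure S ⊆ Xs γ := by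
    intro S hSc
    obtain ⟨γ, hγ, hsub⟩ := hS (closure S) (hclb S hSc)
    exact ⟨max γ (lev q), max_lt hγ (hlev1 q), le_max_right _ _,
      hsub.trans (hmono' _ _ (le_max_left _ _) (max_lt hγ (hlev1 q)))⟩
  set lc : Set X → Ordinal.{u} := fun S =>
    if h : ∃ γ, γ < lam ∧ lev q ≤ γ ∧ closure S ⊆ Xs γ then h.choose else 0 with hlc
  have hlcs : ∀ S : Set X, #S ≤ κ →
      lc S < lam ∧ lev q ≤ lc S ∧ closure S ⊆ Xs (lc S) := by
    intro S h
    rw [hlc]; dsimp only; rw [dif_pos (hlevCh S h)]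
    exact (hlevCh S h).choose_spec
  have hpoolEx : ∀ ρ : Ordinal.{u}, ρ < (Order.succ κ).ord → ∀ s : Ordinal.{u} → X,
      ∃ x, x ∈ (⋂ W ∈ (⋃ η ∈ Set.Iio (ρ+1), CAq (lc (s '' Set.Iio η))), closure W) ∧
        x ∉ Xs (lc (s '' Set.Iio ρ)) := by
    intro ρ hρ s
    have hρ1 : ρ + 1 < (Order.succ κ).ord := by
      rw [Ordinal.add_one_eq_succ]
      exact (succ_ord_isLimit hκ).succ_lt hρ
    apply hUNB
    · intro W hW
      obtain ⟨η, hη, hWη⟩ := Set.mem_iUnion₂.1 hW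
      exact hCAq1 _ W hWη
    · letI : TopologicalSpace (Set X) := ⊥
      apply mk_bUnion_ord_le _ hκ (card_lt_succ_ord hρ1)
      intro η hη
      exact hCAq2 _
    · exact (hlcs _ ((mk_image_ord_le s ρ).trans (card_lt_succ_ord hρ))).1
  set t : Ordinal.{u} → X := Ordinal.lt_wf.fix (fun ρ ih =>
    if hρ : ρ < (Order.succ κ).ord then
      (hpoolEx ρ hρ (fun j => if h : j < ρ then ih j h else q)).choose
    else q) with ht
  have ht_eq : ∀ ρ (hρ : ρ < (Order.succ κ).ord),
      t ρ = (hpoolEx ρ hρ (fun j => if h : j < ρ then t j else q)).choose := by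
    intro ρ hρ
    conv_lhs => rw [ht, WellFounded.fix_eq]
    dsimp only
    rw [dif_pos hρ]
  have himg : ∀ ρ η : Ordinal.{u}, η ≤ ρ →
      (fun j => if h : j < ρ then t j else q) '' Set.Iio η = t '' Set.Iio η := by
    intro ρ η hηρ
    apply Set.image_congr
    intro j hj
    rw [dif_pos (lt_of_lt_of_le hj hηρ)]
  have htspec : ∀ ρ, ρ < (Order.succ κ).ord →
      t ρ ∈ (⋂ W ∈ (⋃ η ∈ Set.Iio (ρ+1), CAq (lc (t '' Set.Iio η))), closure W) ∧
      t ρ ∉ Xs (lc (t '' Set.Iio ρ)) := by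
    intro ρ hρ
    have hsp := (hpoolEx ρ hρ (fun j => if h : j < ρ then t j else q)).choose_spec
    rw [← ht_eq ρ hρ] at hsp
    have hDeq : (⋃ η ∈ Set.Iio (ρ+1),
        CAq (lc ((fun j => if h : j < ρ then t j else q) '' Set.Iio η)))
        = ⋃ η ∈ Set.Iio (ρ+1), CAq (lc (t '' Set.Iio η)) := by
      apply Set.iUnion₂_congr
      intro η hη
      rw [himg ρ η (mem_Iio_add_one.1 hη)]
    rw [hDeq, himg ρ ρ le_rfl] at hsp
    exact hsp
  set Tp : Ordinal.{u} → Set X := fun ν =>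
    ⋂ W ∈ (⋃ η ∈ Set.Iio (ν+1), CAq (lc (t '' Set.Iio η))), closure W with hTp
  set Γt : Ordinal.{u} → Ordinal.{u} := fun ν => lc (t '' Set.Iio ν) with hΓt
  have hTpclosed : ∀ ν, IsClosed (Tp ν) := by
    intro ν
    apply isClosed_biInter
    intro W hW
    exact isClosed_closure
  have hTpmono : ∀ ν ρ : Ordinal.{u}, ν ≤ ρ → Tp ρ ⊆ Tp ν := by
    intro ν ρ h x hx
    refine Set.mem_iInter₂.2 fun W hW => ?_
    obtain ⟨η, hη, hWη⟩ := Set.mem_iUnion₂.1 hW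
    refine Set.mem_iInter₂.1 hx W ?_
    exact Set.mem_biUnion (mem_Iio_add_one.2 ((mem_Iio_add_one.1 hη).trans h)) hWη
  have hcard_img : ∀ ν : Ordinal.{u}, ν < (Order.succ κ).ord → #(t '' Set.Iio ν) ≤ κ :=
    fun ν hν => (mk_image_ord_le t ν).trans (card_lt_succ_ord hν)
  have htrace : ∀ ν, ν < (Order.succ κ).ord → Tp ν ∩ Xs (Γt ν) ⊆ {q} := by
    intro ν hν x hx
    have hguard : Γt ν < lam ∧ lev q ≤ Γt ν :=
      ⟨(hlcs _ (hcard_img ν hν)).1, (hlcs _ (hcard_img ν hν)).2.1⟩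
    have hx2 : x ∈ (⋂ W ∈ CAq (Γt ν), closure W) ∩ Xs (Γt ν) := by
      refine ⟨Set.mem_iInter₂.2 fun W hW => ?_, hx.2⟩
      refine Set.mem_iInter₂.1 hx.1 W ?_
      exact Set.mem_biUnion (mem_Iio_add_one.2 le_rfl) hW
    rw [hCAq3 _ hguard] at hx2
    exact hx2
  have hq_in : ∀ ν, ν < (Order.succ κ).ord → q ∈ Xs (Γt ν) := by
    intro ν hν
    exact hmono' _ _ (hlcs _ (hcard_img ν hν)).2.1 (hlcs _ (hcard_img ν hν)).1 (hlev2 q)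
  have htmem : ∀ ρ, ρ < (Order.succ κ).ord → t ρ ∈ Tp ρ := fun ρ hρ => (htspec ρ hρ).1
  have htne : ∀ ρ, ρ < (Order.succ κ).ord → t ρ ≠ q := by
    intro ρ hρ h
    exact (htspec ρ hρ).2 (h ▸ hq_in ρ hρ)
  have hclinit : ∀ ν, ν < (Order.succ κ).ord →
      closure (t '' Set.Iio ν) ⊆ Xs (Γt ν) :=
    fun ν hν => (hlcs _ (hcard_img ν hν)).2.2
  -- pool is contained in one level
  have hpoolcard : #(t '' Set.Iio ((Order.succ κ).ord)) ≤ 2 ^ κ := by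
    refine (mk_image_ord_le t _).trans ?_
    rw [Cardinal.card_ord]
    exact succ_le_2pow
  obtain ⟨γ0, hγ0, hsub0⟩ := hS _ hpoolcard
  have hγst : max γ0 (lev q) < lam := max_lt hγ0 (hlev1 q)
  have hpoolsub : t '' Set.Iio ((Order.succ κ).ord) ⊆ Xs (max γ0 (lev q)) :=
    hsub0.trans (hmono' _ _ (le_max_left _ _) hγst)
  have hqst : q ∈ Xs (max γ0 (lev q)) := hmono' _ _ (le_max_right _ _) hγst (hlev2 q)
  obtain ⟨Cst, hCst1, hCst2, hCst3⟩ := lemmaA hκ (hψ _ hγst) (hL _ hγst) hqst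
  have hVex : ∃ W ∈ Cst, ∀ b, b < (Order.succ κ).ord →
      ∃ η, b ≤ η ∧ η < (Order.succ κ).ord ∧ t η ∉ closure W := by
    by_contra hc
    push_neg at hc
    have hch : ∀ W : ↥Cst, ∃ b, b < (Order.succ κ).ord ∧
        ∀ η, b ≤ η → η < (Order.succ κ).ord → t η ∈ closure (W : Set X) := by
      intro W
      obtain ⟨b, hb, hb2⟩ := hc W W.2
      exact ⟨b, hb, hb2⟩
    choose bf hbf1 hbf2 using hch
    obtain ⟨b, hb, hble⟩ := exists_bound_lt_succ_ord hκ bf hCst2 hbf1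
    have hmem : t b ∈ (⋂ W ∈ Cst, closure W) ∩ Xs (max γ0 (lev q)) := by
      refine ⟨Set.mem_iInter₂.2 fun W hW => hbf2 ⟨W, hW⟩ b (hble ⟨W, hW⟩) hb, ?_⟩
      exact hpoolsub ⟨b, hb, rfl⟩
    rw [hCst3] at hmem
    exact htne b hb hmem
  obtain ⟨Vst, hVstC, hVstE⟩ := hVex
  have hVstq : q ∈ Vst := (hCst1 Vst hVstC).2
  have hVstopen : IsOpen Vst := (hCst1 Vst hVstC).1
  -- selection of a cofinal subfamily avoiding `closure Vst`
  set r : Ordinal.{u} → Ordinal.{u} := Ordinal.lt_wf.fix (fun ζ ih =>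
    if hν : Ordinal.blsub ζ (fun ε hε => ih ε hε) < (Order.succ κ).ord then
      (hVstE _ hν).choose else 0) with hr
  have hr_eq : ∀ ζ (hν : Ordinal.blsub ζ (fun ε _ => r ε) < (Order.succ κ).ord),
      r ζ = (hVstE _ hν).choose := by
    intro ζ hν
    conv_lhs => rw [hr, WellFounded.fix_eq]
    dsimp only
    rw [dif_pos hν]
  have hrinv : ∀ ζ, ζ < (Order.succ κ).ord →
      Ordinal.blsub ζ (fun ε _ => r ε) < (Order.succ κ).ord ∧
      Ordinal.blsub ζ (fun ε _ => r ε) ≤ r ζ ∧ r ζ < (Order.succ κ).ord ∧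
      t (r ζ) ∉ closure Vst := by
    intro ζ
    induction ζ using Ordinal.induction with
    | _ ζ IH =>
      intro hζ
      have hν : Ordinal.blsub ζ (fun ε _ => r ε) < (Order.succ κ).ord := by
        apply Ordinal.blsub_lt_ord
        · rw [(Cardinal.isRegular_succ hκ).cof_eq]
          exact Cardinal.lt_ord.1 hζ
        · intro ε hε
          exact (IH ε hε (hε.trans hζ)).2.2.1
      have hspec := (hVstE _ hν).choose_spec
      rw [← hr_eq ζ hν] at hspec
      exact ⟨hν, hspec.1, hspec.2.1, hspec.2.2⟩
  have hrlt : ∀ ε ζ : Ordinal.{u}, ε < ζ → ζ < (Order.succ κ).ord → r ε < r ζ := by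
    intro ε ζ h hζ
    exact lt_of_lt_of_le (Ordinal.lt_blsub _ ε h) (hrinv ζ hζ).2.1
  have hνmono : ∀ β ζ : Ordinal.{u}, β ≤ ζ →
      Ordinal.blsub β (fun ε _ => r ε) ≤ Ordinal.blsub ζ (fun ε _ => r ε) := by
    intro β ζ h
    rw [Ordinal.blsub_le_iff]
    intro ε hε
    exact Ordinal.lt_blsub _ ε (lt_of_lt_of_le hε h)
  -- the free sequence
  refine no_long_free hκ (hF _ hγst) (fun ζ => t (r ζ)) ?_ ?_
  · intro ζ hζ
    exact hpoolsub ⟨r ζ, (hrinv ζ hζ).2.2.1, rfl⟩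
  · intro β hβ
    have hνβ : Ordinal.blsub β (fun ε _ => r ε) < (Order.succ κ).ord := (hrinv β hβ).1
    have hinit_sub : (fun ζ => t (r ζ)) '' Set.Iio β ⊆
        t '' Set.Iio (Ordinal.blsub β (fun ε _ => r ε)) := by
      rintro x ⟨ε, hε, rfl⟩
      exact ⟨r ε, Ordinal.lt_blsub _ ε hε, rfl⟩
    have hclinitβ : closure ((fun ζ => t (r ζ)) '' Set.Iio β) ⊆
        Xs (Γt (Ordinal.blsub β (fun ε _ => r ε))) :=
      (closure_mono hinit_sub).trans (hclinit _ hνβ)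
    have hqinit : q ∉ closure ((fun ζ => t (r ζ)) '' Set.Iio β) := by
      intro hcl
      refine closure_disj hVstopen ?_ q hcl hVstq
      rintro x ⟨ε, hε, rfl⟩ hxV
      exact (hrinv ε (hε.trans hβ)).2.2.2 (subset_closure hxV)
    have htail_sub : (fun ζ => t (r ζ)) ''
        {ζ | β ≤ ζ ∧ ζ < (Order.succ κ).ord} ⊆
        Tp (Ordinal.blsub β (fun ε _ => r ε)) := by
      rintro x ⟨i, ⟨hi1, hi2⟩, rfl⟩
      refine hTpmono _ _ ?_ (htmem (r i) (hrinv i hi2).2.2.1)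
      exact (hνmono β i hi1).trans (hrinv i hi2).2.1
    have hcltail : closure ((fun ζ => t (r ζ)) ''
        {ζ | β ≤ ζ ∧ ζ < (Order.succ κ).ord}) ⊆
        Tp (Ordinal.blsub β (fun ε _ => r ε)) :=
      closure_minimal htail_sub (hTpclosed _)
    rw [Set.disjoint_left]
    rintro z ⟨hz1, hz2⟩ ⟨hz3, hz4⟩
    have hzq : z ∈ ({q} : Set X) :=
      htrace _ hνβ ⟨hcltail hz3, hclinitβ hz1⟩
    have : z = q := hzq
    subst this
    exact hqinit hz1

end S9

/-- If the Hausdorff space `X` is the increasing union of subspaces `X_α` (`α < λ`) with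
`F(X_α) ≤ κ`, `ψ(X_α) ≤ κ` and `L(X_α) ≤ κ` (`κ` infinite), then `|X| ≤ 2^κ`. -/
theorem statement9 [T2Space X] {κ : Cardinal.{u}} (hκ : ℵ₀ ≤ κ)
    {lam : Ordinal.{u}} (Xs : Ordinal.{u} → Set X)
    (hunion : (Set.univ : Set X) = ⋃ α ∈ Set.Iio lam, Xs α)
    (hmono : ∀ α β : Ordinal.{u}, α < β → β < lam → Xs α ⊆ Xs β)
    (hF : ∀ α < lam, FreeLE (Xs α) κ)
    (hψ : ∀ α < lam, PseudoLE (Xs α) κ)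
    (hL : ∀ α < lam, LindelofLE (Xs α) κ) :
    #X ≤ 2 ^ κ := by

  classical
  have hmono' : ∀ α β : Ordinal.{u}, α ≤ β → β < lam → Xs α ⊆ Xs β := by
    intro α β h hβ
    rcases eq_or_lt_of_le h with rfl | h'
    · exact subset_rfl
    · exact hmono _ _ h' hβ
  have hlev : ∀ x : X, ∃ γ, γ < lam ∧ x ∈ Xs γ := by
    intro x
    have hx : x ∈ ⋃ α ∈ Set.Iio lam, Xs α := by rw [← hunion]; trivial
    obtain ⟨γ, hγ, hxγ⟩ := Set.mem_iUnion₂.1 hx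
    exact ⟨γ, hγ, hxγ⟩
  choose lev hlev1 hlev2 using hlev
  have hpiece : ∀ γ, γ < lam → #(Xs γ) ≤ 2 ^ κ :=
    fun γ hγ => S9.piece_bound hκ (hF γ hγ) (hψ γ hγ) (hL γ hγ)
  by_cases hS : ∀ S : Set X, #S ≤ 2 ^ κ → ∃ γ, γ < lam ∧ S ⊆ Xs γ
  · have hGOOD := fun q => S9.all_good hκ hmono' hF hψ hL lev hlev1 hlev2 hS q
    choose Dfam hD1 hD2 hD3 using hGOOD
    have hD : ∀ x ∈ (Set.univ : Set X), (∀ W ∈ Dfam x, IsOpen W ∧ x ∈ W) ∧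
        #(Dfam x) ≤ κ ∧ (⋂ W ∈ Dfam x, closure W) ∩ Set.univ = {x} := by
      intro x _
      refine ⟨hD1 x, hD2 x, ?_⟩
      rw [Set.inter_univ]
      exact hD3 x
    have hmain : #(Set.univ : Set X) ≤ 2 ^ κ := by
      refine S9.core hκ Dfam hD ?_ ?_
      · intro B _ hBc Wfun hW
        have hclB : #(closure B) ≤ 2 ^ κ := by
          have h := S9.clb_of_D hκ Dfam hD B hBc
          rwa [Set.inter_univ] at h
        obtain ⟨δ, hδ, hsubδ⟩ := hS (closure B) hclB
        refine S9.cov_of_L (hL δ hδ) ?_ ?_ Wfun hW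
        · rw [Set.inter_univ]; exact hsubδ
        · intro x hx; exact ⟨hx.1, Set.mem_univ _⟩
      · intro g hmem hdisj
        have hrange : #(g '' Set.Iio ((Order.succ κ).ord)) ≤ 2 ^ κ :=
          (S9.mk_image_ord_le g _).trans
            (by rw [Cardinal.card_ord]; exact S9.succ_le_2pow)
        obtain ⟨γ, hγ, hsubγ⟩ := hS _ hrange
        refine S9.no_long_free hκ (hF γ hγ) g ?_ ?_
        · intro ζ hζ; exact hsubγ ⟨ζ, hζ, rfl⟩
        · intro β hβ
          have h := hdisj β hβ
          rw [Set.inter_univ, Set.inter_univ] at h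
          exact h.mono Set.inter_subset_left Set.inter_subset_left
    calc #X = #(Set.univ : Set X) := (@Cardinal.mk_univ X).symm
      _ ≤ 2 ^ κ := hmain
  · push_neg at hS
    obtain ⟨S₀, hS₀c, hS₀⟩ := hS
    have hcov : (Set.univ : Set X) ⊆ ⋃ s : ↥S₀, Xs (lev (s : X)) := by
      intro x _
      obtain ⟨s, hsS, hsn⟩ := Set.not_subset.1 (hS₀ (lev x) (hlev1 x))
      have hlt : lev x < lev s := by
        by_contra hc
        push_neg at hc
        exact hsn (hmono' _ _ hc (hlev1 x) (hlev2 s))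
      exact Set.mem_iUnion.2 ⟨⟨s, hsS⟩, hmono' _ _ hlt.le (hlev1 s) (hlev2 x)⟩
    have hbound : #(Set.univ : Set X) ≤ 2 ^ κ := by
      refine (Cardinal.mk_le_mk_of_subset hcov).trans ?_
      refine S9.mk_iUnion_le' _ (S9.inf2pow hκ) hS₀c ?_
      intro s
      exact hpiece _ (hlev1 (s : X))
    calc #X = #(Set.univ : Set X) := (@Cardinal.mk_univ X).symm
      _ ≤ 2 ^ κ := hbound
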